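/- Let u > 0, a > 0, and set Δ = u² - 2s for s ∈ (-u²/2, u²/2). Then for all s ≥ 0 in this range, -(a/√Δ)·tanh(a√Δ) + (a/u)·tanh(au) + 2(a²/u²)·s ≥ 0, and for all s < 0 in this range, the same expression is < 0. -/

import Mathlib

open Real Set

/-- helper: monotonicity from 0 on `Ici 0` via a derivative. -/
private lemma my_mono_from_zero {f f' : ℝ → ℝ} (hd : ∀ t, HasDerivAt f (f' t) t)
    (h0 : ∀ t, 0 ≤ t → 0 ≤ f' t) {t : ℝ} (ht : 0 ≤ t) : f 0 ≤ f t := by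
  have : MonotoneOn f (Ici (0:ℝ)) := by
    apply monotoneOn_of_deriv_nonneg (convex_Ici 0)
      (fun x _ => (hd x).continuousAt.continuousWithinAt)
      (fun x hx => (hd x).differentiableAt.differentiableWithinAt)
    intro x hx
    rw [interior_Ici, mem_Ioi] at hx
    rw [(hd x).deriv]
    exact h0 x hx.le
  exact this (le_refl (0:ℝ) : (0:ℝ) ∈ Ici (0:ℝ)) ht ht

private lemma my_sinh_le (t : ℝ) (ht : 0 ≤ t) : Real.sinh t ≤ t * Real.cosh t := by
  have hd : ∀ x : ℝ, HasDerivAt (fun y => y * Real.cosh y - Real.sinh y)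
      (1 * Real.cosh x + x * Real.sinh x - Real.cosh x) x := fun x =>
    ((hasDerivAt_id x).mul (Real.hasDerivAt_cosh x)).sub (Real.hasDerivAt_sinh x)
  have := my_mono_from_zero hd (fun x hx => by
    have h := mul_nonneg hx (Real.sinh_nonneg_iff.2 hx)
    nlinarith) ht
  simpa using this

private lemma my_cosh_ge (t : ℝ) (ht : 0 ≤ t) : 1 + t ^ 2 / 2 ≤ Real.cosh t := by
  have hd : ∀ x : ℝ, HasDerivAt (fun y => Real.cosh y - (1 + y ^ 2 / 2))
      (Real.sinh x - (0 + 2 * x ^ 1 / 2)) x := fun x =>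
    (Real.hasDerivAt_cosh x).sub ((hasDerivAt_const x (1:ℝ)).add ((hasDerivAt_pow 2 x).div_const 2))
  have := my_mono_from_zero hd (fun x hx => by
    have : x ≤ Real.sinh x := Real.self_le_sinh_iff.2 hx
    simp only [pow_one]
    linarith) ht
  simp only [Real.cosh_zero] at this
  norm_num at this
  linarith

private lemma my_sinh_cubic (t : ℝ) (ht : 0 ≤ t) : t + t ^ 3 / 6 ≤ Real.sinh t := by
  have hd : ∀ x : ℝ, HasDerivAt (fun y => Real.sinh y - (y + y ^ 3 / 6))
      (Real.cosh x - (1 + 3 * x ^ 2 / 6)) x := fun x =>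
    (Real.hasDerivAt_sinh x).sub ((hasDerivAt_id x).add ((hasDerivAt_pow 3 x).div_const 6))
  have := my_mono_from_zero hd (fun x hx => by
    have := my_cosh_ge x hx
    nlinarith) ht
  simp only [Real.sinh_zero] at this
  norm_num at this
  linarith

/-- The key pointwise inequality: `3 sinh t cosh² t ≥ 3 t cosh t + 2 t² sinh t`. -/
private lemma my_keyA (t : ℝ) (ht : 0 ≤ t) :
    3 * t * Real.cosh t + 2 * t ^ 2 * Real.sinh t ≤ 3 * Real.sinh t * Real.cosh t ^ 2 := by
  have h1 : Real.sinh t ≤ t * Real.cosh t := my_sinh_le t ht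
  have h2 : 2 * t + (2 * t) ^ 3 / 6 ≤ Real.sinh (2 * t) := my_sinh_cubic (2 * t) (by linarith)
  rw [Real.sinh_two_mul] at h2
  have hc : (1:ℝ) ≤ Real.cosh t := Real.one_le_cosh t
  -- 3 sinh cosh ≥ 3t + 2t³, so 3 sinh cosh² ≥ 3t cosh + 2t³ cosh ≥ 3t cosh + 2t² sinh
  nlinarith [mul_le_mul_of_nonneg_right (show 3*t + 2*t^3 ≤ 3 * Real.sinh t * Real.cosh t by nlinarith)
      (by positivity : (0:ℝ) ≤ Real.cosh t),
    mul_le_mul_of_nonneg_left h1 (by positivity : (0:ℝ) ≤ 2 * t ^ 2)]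

noncomputable def myK (t : ℝ) : ℝ :=
  (Real.sinh t * Real.cosh t - t) / (t ^ 3 * Real.cosh t ^ 2)

private lemma my_hasDerivAt_K {t : ℝ} (ht : 0 < t) :
    HasDerivAt myK
      (((Real.cosh t * Real.cosh t + Real.sinh t * Real.sinh t - 1) * (t ^ 3 * Real.cosh t ^ 2) -
        (Real.sinh t * Real.cosh t - t) *
          (3 * t ^ 2 * Real.cosh t ^ 2 + t ^ 3 * (2 * Real.cosh t ^ 1 * Real.sinh t))) /
        (t ^ 3 * Real.cosh t ^ 2) ^ 2) t := by
  have hN : HasDerivAt (fun y => Real.sinh y * Real.cosh y - y)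
      (Real.cosh t * Real.cosh t + Real.sinh t * Real.sinh t - 1) t :=
    ((Real.hasDerivAt_sinh t).mul (Real.hasDerivAt_cosh t)).sub (hasDerivAt_id t)
  have hD : HasDerivAt (fun y => y ^ 3 * Real.cosh y ^ 2)
      (3 * t ^ 2 * Real.cosh t ^ 2 + t ^ 3 * (2 * Real.cosh t ^ 1 * Real.sinh t)) t := by
    have h1 : HasDerivAt (fun y : ℝ => y ^ 3) (3 * t ^ 2) t := by
      simpa using hasDerivAt_pow 3 t
    have h2 : HasDerivAt (fun y => Real.cosh y ^ 2) (2 * Real.cosh t ^ 1 * Real.sinh t) t :=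
      (Real.hasDerivAt_cosh t).pow 2
    exact h1.mul h2
  have hne : t ^ 3 * Real.cosh t ^ 2 ≠ 0 := by positivity
  exact hN.div hD hne

private lemma my_K_anti : AntitoneOn myK (Ioi (0:ℝ)) := by
  apply antitoneOn_of_deriv_nonpos (convex_Ioi 0)
    (fun x hx => (my_hasDerivAt_K (mem_Ioi.1 hx)).continuousAt.continuousWithinAt)
    (fun x hx => by
      rw [interior_Ioi] at hx
      exact (my_hasDerivAt_K (mem_Ioi.1 hx)).differentiableAt.differentiableWithinAt)
  intro x hx
  rw [interior_Ioi, mem_Ioi] at hx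
  rw [(my_hasDerivAt_K hx).deriv]
  apply div_nonpos_of_nonpos_of_nonneg _ (by positivity)
  have hA := my_keyA x hx.le
  have hid : Real.cosh x ^ 2 - Real.sinh x ^ 2 = 1 := Real.cosh_sq_sub_sinh_sq x
  have hnum : (Real.cosh x * Real.cosh x + Real.sinh x * Real.sinh x - 1) * (x ^ 3 * Real.cosh x ^ 2) -
      (Real.sinh x * Real.cosh x - x) *
        (3 * x ^ 2 * Real.cosh x ^ 2 + x ^ 3 * (2 * Real.cosh x ^ 1 * Real.sinh x)) =
      x ^ 2 * Real.cosh x *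
        (3 * x * Real.cosh x + 2 * x ^ 2 * Real.sinh x - 3 * Real.sinh x * Real.cosh x ^ 2) := by
    linear_combination (x ^ 3 * Real.cosh x ^ 2) * hid
  rw [hnum]
  apply mul_nonpos_of_nonneg_of_nonpos (by positivity)
  linarith

noncomputable def myG (b t : ℝ) : ℝ := Real.sinh t / (t * Real.cosh t) + t ^ 2 / b ^ 2

private lemma my_hasDerivAt_G (b : ℝ) {t : ℝ} (ht : 0 < t) :
    HasDerivAt (myG b) ((t - Real.sinh t * Real.cosh t) / (t * Real.cosh t) ^ 2 + 2 * t / b ^ 2) t := by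
  have hden : HasDerivAt (fun y => y * Real.cosh y) (1 * Real.cosh t + t * Real.sinh t) t :=
    (hasDerivAt_id t).mul (Real.hasDerivAt_cosh t)
  have hne : t * Real.cosh t ≠ 0 := by positivity
  have h1 : HasDerivAt (fun y => Real.sinh y / (y * Real.cosh y))
      ((Real.cosh t * (t * Real.cosh t) - Real.sinh t * (1 * Real.cosh t + t * Real.sinh t)) /
        (t * Real.cosh t) ^ 2) t := (Real.hasDerivAt_sinh t).div hden hne
  have h2 : HasDerivAt (fun y : ℝ => y ^ 2 / b ^ 2) (2 * t / b ^ 2) t := by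
    simpa using (hasDerivAt_pow 2 t).div_const (b ^ 2)
  have hnum : Real.cosh t * (t * Real.cosh t) - Real.sinh t * (1 * Real.cosh t + t * Real.sinh t) =
      t - Real.sinh t * Real.cosh t := by
    have hid : Real.cosh t ^ 2 - Real.sinh t ^ 2 = 1 := Real.cosh_sq_sub_sinh_sq t
    linear_combination t * hid
  rw [hnum] at h1
  exact h1.add h2

/-- derivative of G expressed through K -/
private lemma my_G_deriv_eq (b : ℝ) {t : ℝ} (ht : 0 < t) :
    deriv (myG b) t = 2 * t / b ^ 2 - t * myK t := by
  rw [(my_hasDerivAt_G b ht).deriv, myK]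
  have h1 : t * Real.cosh t ≠ 0 := by positivity
  have h2 : t ^ 3 * Real.cosh t ^ 2 ≠ 0 := by positivity
  field_simp
  ring

private lemma my_G_mono_case1 {b x : ℝ} (hb : 0 < b) (hx : 0 < x) (hxb : x ≤ b)
    (hK : myK x ≤ 2 / b ^ 2) : myG b x ≤ myG b b := by
  have : MonotoneOn (myG b) (Icc x b) := by
    apply monotoneOn_of_deriv_nonneg (convex_Icc x b)
      (fun t htm => (my_hasDerivAt_G b (lt_of_lt_of_le hx htm.1)).continuousAt.continuousWithinAt)
      (fun t htm => by
        rw [interior_Icc] at htm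
        exact (my_hasDerivAt_G b (lt_trans hx htm.1)).differentiableAt.differentiableWithinAt)
    intro t htm
    rw [interior_Icc] at htm
    have htpos : 0 < t := lt_trans hx htm.1
    rw [my_G_deriv_eq b htpos]
    have hKt : myK t ≤ myK x := my_K_anti (mem_Ioi.2 hx) (mem_Ioi.2 htpos) htm.1.le
    have h4 : myK t ≤ 2 / b ^ 2 := le_trans hKt hK
    have h5 := mul_le_mul_of_nonneg_left h4 htpos.le
    have h6 : t * (2 / b ^ 2) = 2 * t / b ^ 2 := by ring
    linarith
  exact this (by constructor <;> linarith) (by constructor <;> linarith) hxb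

private lemma my_G_anti_case2 {b x t : ℝ} (hx : 0 < x) (ht : 0 < t) (htx : t ≤ x)
    (hK : 2 / b ^ 2 < myK x) : myG b x ≤ myG b t := by
  have : AntitoneOn (myG b) (Icc t x) := by
    apply antitoneOn_of_deriv_nonpos (convex_Icc t x)
      (fun y hym => (my_hasDerivAt_G b (lt_of_lt_of_le ht hym.1)).continuousAt.continuousWithinAt)
      (fun y hym => by
        rw [interior_Icc] at hym
        exact (my_hasDerivAt_G b (lt_trans ht hym.1)).differentiableAt.differentiableWithinAt)
    intro y hym
    rw [interior_Icc] at hym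
    have hypos : 0 < y := lt_trans ht hym.1
    rw [my_G_deriv_eq b hypos]
    have hKy : myK x ≤ myK y := my_K_anti (mem_Ioi.2 hypos) (mem_Ioi.2 hx) hym.2.le
    have h4 : 2 / b ^ 2 < myK y := lt_of_lt_of_le hK hKy
    have h5 := mul_lt_mul_of_pos_left h4 hypos
    have h6 : y * (2 / b ^ 2) = 2 * y / b ^ 2 := by ring
    linarith
  exact this (by constructor <;> linarith) (by constructor <;> linarith) htx

private lemma my_G_le_one_aux {b x : ℝ} (hb : 0 < b) (hx : 0 < x)
    (hK : 2 / b ^ 2 < myK x) : myG b x ≤ 1 := by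
  by_contra hcon
  push_neg at hcon
  set ε := myG b x - 1 with hε
  have hεpos : 0 < ε := by linarith
  set t := min x (b * Real.sqrt (ε / 2)) with htdef
  have hsq : 0 < Real.sqrt (ε / 2) := Real.sqrt_pos.2 (by linarith)
  have htpos : 0 < t := lt_min hx (by positivity)
  have htx : t ≤ x := min_le_left _ _
  have h1 : myG b x ≤ myG b t := my_G_anti_case2 hx htpos htx hK
  have h2 : Real.sinh t / (t * Real.cosh t) ≤ 1 := by
    rw [div_le_one (by positivity)]
    exact my_sinh_le t htpos.le
  have h3 : t ^ 2 / b ^ 2 ≤ ε / 2 := by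
    have ht2 : t ≤ b * Real.sqrt (ε / 2) := min_le_right _ _
    have : t ^ 2 ≤ (b * Real.sqrt (ε / 2)) ^ 2 := by
      apply pow_le_pow_left₀ htpos.le ht2
    rw [mul_pow, Real.sq_sqrt (by linarith : (0:ℝ) ≤ ε / 2)] at this
    rw [div_le_iff₀ (by positivity)]
    linarith
  have : myG b t ≤ 1 + ε / 2 := by
    rw [myG]
    linarith
  have : myG b x ≤ 1 + ε / 2 := le_trans h1 this
  linarith

/-- For `x ≤ b`: `G x ≤ G b`. -/
private lemma my_G_le {b x : ℝ} (hb : 0 < b) (hx : 0 < x) (hxb : x ≤ b) :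
    myG b x ≤ myG b b := by
  rcases le_or_gt (myK x) (2 / b ^ 2) with h | h
  · exact my_G_mono_case1 hb hx hxb h
  · have h1 : myG b x ≤ 1 := my_G_le_one_aux hb hx h
    have h2 : 0 < Real.sinh b / (b * Real.cosh b) := by
      apply div_pos (Real.sinh_pos_iff.2 hb) (by positivity)
    have : myG b b = Real.sinh b / (b * Real.cosh b) + 1 := by
      rw [myG]
      congr 1
      field_simp
    linarith

/-- For `b < x`: `G b < G x`. -/
private lemma my_G_lt {b x : ℝ} (hb : 0 < b) (hbx : b < x) : myG b b < myG b x := by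
  have : StrictMonoOn (myG b) (Icc b x) := by
    apply strictMonoOn_of_deriv_pos (convex_Icc b x)
      (fun t htm => (my_hasDerivAt_G b (lt_of_lt_of_le hb htm.1)).continuousAt.continuousWithinAt)
    intro t htm
    rw [interior_Icc] at htm
    have htpos : 0 < t := lt_trans hb htm.1
    rw [my_G_deriv_eq b htpos]
    -- t * K t < 1/t  and  2t/b² > 2/t
    have h1 : Real.sinh t ≤ t * Real.cosh t := my_sinh_le t htpos.le
    have hKlt2 : myK t < 1 / t ^ 2 := by
      rw [myK, div_lt_div_iff₀ (by positivity) (by positivity)]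
      have hcp : (0:ℝ) < Real.cosh t := Real.cosh_pos t
      nlinarith [mul_le_mul_of_nonneg_right (mul_le_mul_of_nonneg_right h1 hcp.le) (sq_nonneg t),
        pow_pos htpos 3]
    have hKlt : t * myK t < 1 / t := by
      have h' := mul_lt_mul_of_pos_left hKlt2 htpos
      have h'' : t * (1 / t ^ 2) = 1 / t := by
        field_simp
      linarith
    have h2 : 2 / t < 2 * t / b ^ 2 := by
      rw [div_lt_div_iff₀ htpos (by positivity)]
      nlinarith [htm.1, hb]
    have h3 : (0:ℝ) < 1 / t := by positivity
    have h4 : (2:ℝ) / t = 1 / t + 1 / t := by ring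
    linarith
  exact this (by constructor <;> linarith) (by constructor <;> linarith) hbx

theorem stmt_8 (u a : ℝ) (hu : 0 < u) (ha : 0 < a) (s : ℝ)
    (hs : s ∈ Set.Ioo (-(u ^ 2) / 2) (u ^ 2 / 2)) :
    (0 ≤ s →
      0 ≤ -(a / Real.sqrt (u ^ 2 - 2 * s)) * Real.tanh (a * Real.sqrt (u ^ 2 - 2 * s)) +
        (a / u) * Real.tanh (a * u) + 2 * (a ^ 2 / u ^ 2) * s) ∧
    (s < 0 →
      -(a / Real.sqrt (u ^ 2 - 2 * s)) * Real.tanh (a * Real.sqrt (u ^ 2 - 2 * s)) +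
        (a / u) * Real.tanh (a * u) + 2 * (a ^ 2 / u ^ 2) * s < 0) := by
  obtain ⟨hs1, hs2⟩ := hs
  have hΔ : 0 < u ^ 2 - 2 * s := by linarith
  set v := Real.sqrt (u ^ 2 - 2 * s) with hvdef
  have hv : 0 < v := Real.sqrt_pos.2 hΔ
  have hv2 : v ^ 2 = u ^ 2 - 2 * s := Real.sq_sqrt hΔ.le
  set b := a * u with hbdef
  set x := a * v with hxdef
  have hb : 0 < b := by positivity
  have hx : 0 < x := by positivity
  -- the expression equals a² * (G b - G x)
  have hexpr : -(a / v) * Real.tanh (a * v) + (a / u) * Real.tanh (a * u) +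
      2 * (a ^ 2 / u ^ 2) * s = a ^ 2 * (myG b b - myG b x) := by
    rw [myG, myG, Real.tanh_eq_sinh_div_cosh, Real.tanh_eq_sinh_div_cosh]
    have hs' : s = (u ^ 2 - v ^ 2) / 2 := by linarith
    rw [hs', hbdef, hxdef]
    have hcu : Real.cosh (a * u) ≠ 0 := (Real.cosh_pos _).ne'
    have hcv : Real.cosh (a * v) ≠ 0 := (Real.cosh_pos _).ne'
    field_simp
    ring
  constructor
  · intro hspos
    have hvu : v ≤ u := by
      rw [hvdef]
      calc Real.sqrt (u ^ 2 - 2 * s) ≤ Real.sqrt (u ^ 2) := by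
            apply Real.sqrt_le_sqrt; linarith
        _ = u := by rw [Real.sqrt_sq hu.le]
    have hxb : x ≤ b := by
      rw [hxdef, hbdef]
      exact mul_le_mul_of_nonneg_left hvu ha.le
    rw [hexpr]
    exact mul_nonneg (pow_pos ha 2).le (sub_nonneg.2 (my_G_le hb hx hxb))
  · intro hsneg
    have huv : u < v := by
      rw [hvdef]
      calc u = Real.sqrt (u ^ 2) := by rw [Real.sqrt_sq hu.le]
        _ < Real.sqrt (u ^ 2 - 2 * s) := by
            apply Real.sqrt_lt_sqrt (by positivity); linarith
    have hbx : b < x := by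
      rw [hxdef, hbdef]
      exact mul_lt_mul_of_pos_left huv ha
    rw [hexpr]
    have h := mul_pos (pow_pos ha 2) (sub_pos.2 (my_G_lt hb hbx))
    nlinarith
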